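/- arXiv:1707.08288 — 6 statements merged into one kernel-verified Lean document; each statement's English description precedes it below -/
import Mathlib

section
/- Let L = (L₁,…,L₅) ∈ ℝ⁵. Then L satisfies L₁ = (2√3 − 3)L₂ + L₄, L₂ = L₃, L₄ = L₅ and L₄ > L₂ > 0 if and only if there exist real numbers α, β with β > (3 + 2√3)α > 0 such that L = α·v_I + β·v_II. (Equivalence of statements (ii) and (iii) of Lemma 1.) -/
noncomputable def vI : EuclideanSpace ℝ (Fin 5) :=
  WithLp.toLp 2 ![2, -(3 + 2 * Real.sqrt 3), -(3 + 2 * Real.sqrt 3), 5, 5]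

noncomputable def vII : EuclideanSpace ℝ (Fin 5) :=
  WithLp.toLp 2 ![2 * (Real.sqrt 3 - 1), 1, 1, 1, 1]

theorem lemma1_ii_iff_iii (L : EuclideanSpace ℝ (Fin 5)) :
    (L 0 = (2 * Real.sqrt 3 - 3) * L 1 + L 3 ∧ L 1 = L 2 ∧ L 3 = L 4 ∧
      L 3 > L 1 ∧ L 1 > 0) ↔
    (∃ α β : ℝ, β > (3 + 2 * Real.sqrt 3) * α ∧ (3 + 2 * Real.sqrt 3) * α > 0 ∧
      L = α • vI + β • vII) := by
  have hs : Real.sqrt 3 ^ 2 = 3 := Real.sq_sqrt (by norm_num)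
  have hsp : (1:ℝ) < Real.sqrt 3 := by nlinarith [Real.sqrt_nonneg 3]
  constructor
  · rintro ⟨h0, h12, h34, h31, h1⟩
    set s := Real.sqrt 3 with hsdef
    refine ⟨(L 3 - L 1) / (8 + 2 * s), L 1 + (3 + 2 * s) * ((L 3 - L 1) / (8 + 2 * s)), ?_, ?_, ?_⟩
    · nlinarith [div_pos (by linarith : (0:ℝ) < L 3 - L 1) (by linarith : (0:ℝ) < 8 + 2 * s)]
    · have hd : (0:ℝ) < (L 3 - L 1) / (8 + 2 * s) :=
        div_pos (by linarith) (by positivity)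
      have : (0:ℝ) < 3 + 2 * s := by positivity
      exact mul_pos this hd
    · ext i
      have hne : (8 + 2 * s) ≠ 0 := by positivity
      fin_cases i <;>
        simp [vI, vII, PiLp.add_apply, PiLp.smul_apply, smul_eq_mul] <;>
        field_simp <;> nlinarith [hs, h0, h12, h34]
  · rintro ⟨α, β, hβα, hα, hL⟩
    set s := Real.sqrt 3 with hsdef
    have hc : (0:ℝ) < 3 + 2 * s := by nlinarith
    have hαpos : 0 < α := by nlinarith
    have hcoord : ∀ i, L i = α * vI i + β * vII i := by
      intro i; rw [hL]; rfl
    have e0 := hcoord 0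
    have e1 := hcoord 1
    have e2 := hcoord 2
    have e3 := hcoord 3
    have e4 := hcoord 4
    simp [vI, vII] at e0 e1 e2 e3 e4
    refine ⟨by nlinarith, by rw [e1, e2], by rw [e3, e4], by nlinarith, by nlinarith⟩
end

section
/- (Lemma 4.) The linear span of {v_II} in ℝ⁵ equals the intersection of the linear span of {v_I, v_II} with the linear span of {v_III, v_II}; that is, span{v_II} = span{v_I, v_II} ∩ span{v_III, v_II}. -/
noncomputable def vIII : EuclideanSpace ℝ (Fin 5) :=
  WithLp.toLp 2 ![2, 5, 5, -(3 + 2 * Real.sqrt 3), -(3 + 2 * Real.sqrt 3)]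

theorem lemma4_span_inter :
    Submodule.span ℝ ({vII} : Set (EuclideanSpace ℝ (Fin 5))) =
      Submodule.span ℝ ({vI, vII} : Set (EuclideanSpace ℝ (Fin 5))) ⊓
        Submodule.span ℝ ({vIII, vII} : Set (EuclideanSpace ℝ (Fin 5))) := by
  apply le_antisymm
  · exact le_inf
      (Submodule.span_mono (by simp [Set.subset_insert]))
      (Submodule.span_mono (by simp [Set.subset_insert]))
  · rintro x ⟨hx1, hx2⟩
    rw [SetLike.mem_coe, Submodule.mem_span_pair] at hx1
    rw [SetLike.mem_coe, Submodule.mem_span_pair] at hx2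
    obtain ⟨a, b, hab⟩ := hx1
    obtain ⟨c, d, hcd⟩ := hx2
    have s3 : Real.sqrt 3 ^ 2 = 3 := Real.sq_sqrt (by norm_num)
    have h0 : a * (2:ℝ) + b * (2 * (Real.sqrt 3 - 1))
        = c * 2 + d * (2 * (Real.sqrt 3 - 1)) := by
      have := congrArg (fun v => v 0) (hab.trans hcd.symm)
      simpa [vI, vII, vIII] using this
    have h1 : a * (-(3 + 2 * Real.sqrt 3)) + b * 1 = c * 5 + d * 1 := by
      have := congrArg (fun v => v 1) (hab.trans hcd.symm)
      simpa [vI, vII, vIII] using this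
    have h3 : a * (5:ℝ) + b * 1 = c * (-(3 + 2 * Real.sqrt 3)) + d * 1 := by
      have := congrArg (fun v => v 3) (hab.trans hcd.symm)
      simpa [vI, vII, vIII] using this
    have hs2 : Real.sqrt 3 < 2 := by nlinarith [s3, Real.sqrt_nonneg 3]
    have hac : c = -a := by
      have h : (a + c) * (8 + 2 * Real.sqrt 3) = 0 := by linear_combination h3 - h1
      rcases mul_eq_zero.mp h with h' | h'
      · linarith
      · nlinarith [Real.sqrt_nonneg 3]
    subst hac
    have key : a * (20 - 8 * Real.sqrt 3) = 0 := by
      linear_combination h0 - (2 * (Real.sqrt 3 - 1)) * h1 - 4 * a * s3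
    have ha : a = 0 := by
      rcases mul_eq_zero.mp key with h' | h'
      · exact h'
      · nlinarith
    rw [Submodule.mem_span_singleton]
    refine ⟨b, ?_⟩
    rw [← hab, ha]
    simp
end

section
/- (Theorem 5, at the point v_II.) The set 𝓛 ⊂ ℝ⁵ is not locally-analytic at v_II: there do not exist an open neighborhood U ⊆ ℝ⁵ of the point v_II and a real-analytic function φ : ℝ⁵ → ℝ (analytic on all of ℝ⁵) such that 𝓛 ∩ U = {x ∈ ℝ⁵ : φ(x) = 0} ∩ U. -/
def LsetI : Set (EuclideanSpace ℝ (Fin 5)) :=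
  {p | ∃ α β : ℝ, β > (3 + 2 * Real.sqrt 3) * α ∧ (3 + 2 * Real.sqrt 3) * α > 0 ∧
    p = α • vI + β • vII}

def LsetII : Set (EuclideanSpace ℝ (Fin 5)) :=
  {p | ∃ γ : ℝ, γ > 0 ∧ p = γ • vII}

def LsetIII : Set (EuclideanSpace ℝ (Fin 5)) :=
  {p | ∃ δ ε : ℝ, ε > (3 + 2 * Real.sqrt 3) * δ ∧ (3 + 2 * Real.sqrt 3) * δ > 0 ∧
    p = δ • vIII + ε • vII}

def Lset : Set (EuclideanSpace ℝ (Fin 5)) := LsetI ∪ LsetII ∪ LsetIII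

theorem Lset_not_locally_analytic_at_vII :
    ¬ ∃ (U : Set (EuclideanSpace ℝ (Fin 5))) (φ : EuclideanSpace ℝ (Fin 5) → ℝ),
      IsOpen U ∧ vII ∈ U ∧ (∀ x, AnalyticAt ℝ φ x) ∧
      Lset ∩ U = {x | φ x = 0} ∩ U := by
  rintro ⟨U, φ, hU, hvU, hφ, hEq⟩
  have h3 : Real.sqrt 3 ^ 2 = 3 := Real.sq_sqrt (by norm_num)
  have h3lb : (1:ℝ) < Real.sqrt 3 := by nlinarith [Real.sqrt_nonneg 3]
  have h3ub : Real.sqrt 3 < 2 := by nlinarith [Real.sqrt_nonneg 3]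
  set c : ℝ := 3 + 2 * Real.sqrt 3 with hc
  have hcpos : (0:ℝ) < c := by simp only [hc]; linarith
  -- the analytic curve t ↦ t • vI + vII
  set ψ : ℝ → EuclideanSpace ℝ (Fin 5) := fun t => t • vI + vII with hψdef
  have hψcont : Continuous ψ := by
    apply Continuous.add
    · exact (continuous_id.smul continuous_const)
    · exact continuous_const
  have hψ0 : ψ 0 = vII := by simp [hψdef]
  have hmem : ψ ⁻¹' U ∈ nhds (0:ℝ) := by
    apply hψcont.continuousAt.preimage_mem_nhds
    rw [hψ0]; exact hU.mem_nhds hvU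
  obtain ⟨ε, hεpos, hball⟩ := Metric.mem_nhds_iff.mp hmem
  have hball' : ∀ t : ℝ, |t| < ε → ψ t ∈ U := by
    intro t ht
    exact hball (by simpa [Metric.mem_ball, Real.dist_eq] using ht)
  set δ : ℝ := min ε (1/c) with hδdef
  have hδpos : 0 < δ := lt_min hεpos (by positivity)
  have hδε : δ ≤ ε := min_le_left _ _
  have hδc : δ ≤ 1/c := min_le_right _ _
  -- φ ∘ ψ is analytic
  have hg : ∀ t : ℝ, AnalyticAt ℝ (fun t => φ (ψ t)) t := by
    intro t
    exact (hφ (ψ t)).comp ((analyticAt_id.smul analyticAt_const).add analyticAt_const)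
  -- φ ∘ ψ vanishes on (0, δ)
  have hvanish : ∀ t ∈ Set.Ioo (0:ℝ) δ, φ (ψ t) = 0 := by
    intro t ht
    have htU : ψ t ∈ U := hball' t (by rw [abs_of_pos ht.1]; exact lt_of_lt_of_le ht.2 hδε)
    have htL : ψ t ∈ Lset := by
      left; left
      refine ⟨t, 1, ?_, mul_pos hcpos ht.1, by simp [hψdef]⟩
      have : t < 1/c := lt_of_lt_of_le ht.2 hδc
      calc c * t < c * (1/c) := mul_lt_mul_of_pos_left this hcpos
        _ = 1 := by field_simp
    have : ψ t ∈ {x | φ x = 0} ∩ U := hEq ▸ ⟨htL, htU⟩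
    exact this.1
  -- identity theorem: φ ∘ ψ vanishes everywhere
  have hzero : ∀ t : ℝ, φ (ψ t) = 0 := by
    have hev : (fun t => φ (ψ t)) =ᶠ[nhds (δ/2)] 0 := by
      apply Filter.eventuallyEq_of_mem (s := Set.Ioo (0:ℝ) δ)
      · exact Ioo_mem_nhds (by linarith) (by linarith)
      · exact hvanish
    have := AnalyticOnNhd.eqOn_zero_of_preconnected_of_eventuallyEq_zero
      (fun t _ => hg t) isPreconnected_univ (Set.mem_univ (δ/2)) hev
    intro t
    exact this (Set.mem_univ t)
  -- the point x = ψ(-(δ/2)) is in the zero set and in U, hence in Lset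
  set t : ℝ := δ/2 with ht
  have htpos : 0 < t := by positivity
  have htε : t < ε := by simp only [ht]; linarith
  have htc : t < 1/c := by simp only [ht]; linarith
  have hxU : ψ (-t) ∈ U := hball' (-t) (by rw [abs_neg, abs_of_pos htpos]; exact htε)
  have hxL : ψ (-t) ∈ Lset := by
    have : ψ (-t) ∈ {x | φ x = 0} ∩ U := ⟨hzero (-t), hxU⟩
    rw [← hEq] at this
    exact this.1
  -- but x is not in Lset: contradiction via coordinates
  have hx1 : ψ (-t) 1 = 1 + t * c := by
    have : ψ (-t) 1 = (-t) * vI 1 + vII 1 := by simp [hψdef]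
    rw [this]; simp [vI, vII, hc]; ring
  have hx3 : ψ (-t) 3 = 1 - 5 * t := by
    have : ψ (-t) 3 = (-t) * vI 3 + vII 3 := by simp [hψdef]
    rw [this]; simp [vI, vII]; ring
  have hx0 : ψ (-t) 0 = -2*t + 2*(Real.sqrt 3 - 1) := by
    have : ψ (-t) 0 = (-t) * vI 0 + vII 0 := by simp [hψdef]
    rw [this]; simp [vI, vII]; ring
  rcases hxL with (h | h) | h
  · -- LsetI
    obtain ⟨α, β, hβ, hα, hx⟩ := h
    have e1 : 1 + t * c = -c * α + β := by
      have := congrArg (fun v => v 1) hx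
      rw [hx1] at this
      rw [this]; simp [vI, vII, hc]; ring
    have e3 : 1 - 5 * t = 5 * α + β := by
      have := congrArg (fun v => v 3) hx
      rw [hx3] at this
      rw [this]; simp [vI, vII]; ring
    -- (5+c)α = -t(5+c) ⇒ α = -t < 0, contradicting cα > 0
    have hαval : α = -t := by
      have h5c : (5:ℝ) + c ≠ 0 := by linarith
      have h2 : (5 + c) * α = (5 + c) * (-t) := by linarith
      exact mul_left_cancel₀ h5c h2
    rw [hαval] at hα
    nlinarith [mul_pos hcpos htpos]
  · -- LsetII
    obtain ⟨γ, hγ, hx⟩ := h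
    have e1 : 1 + t * c = γ := by
      have := congrArg (fun v => v 1) hx
      rw [hx1] at this
      rw [this]; simp [vII]
    have e3 : 1 - 5 * t = γ := by
      have := congrArg (fun v => v 3) hx
      rw [hx3] at this
      rw [this]; simp [vII]
    nlinarith
  · -- LsetIII
    obtain ⟨d, e, he, hd, hx⟩ := h
    have e1 : 1 + t * c = 5 * d + e := by
      have := congrArg (fun v => v 1) hx
      rw [hx1] at this
      rw [this]; simp [vIII, vII]; ring
    have e3 : 1 - 5 * t = -c * d + e := by
      have := congrArg (fun v => v 3) hx
      rw [hx3] at this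
      rw [this]; simp [vIII, vII, hc]; ring
    have e0 : -2*t + 2*(Real.sqrt 3 - 1) = 2 * d + 2*(Real.sqrt 3 - 1) * e := by
      have := congrArg (fun v => v 0) hx
      rw [hx0] at this
      rw [this]; simp [vIII, vII]; ring
    -- from e1, e3: d = t, e = 1 + tc - 5t; then e0 fails
    have hdval : d = t := by
      have h5c : (5:ℝ) + c ≠ 0 := by linarith
      have h2 : (5 + c) * d = (5 + c) * t := by linarith
      exact mul_left_cancel₀ h5c h2
    have heval : e = 1 + t * c - 5 * t := by rw [hdval] at e1; linarith
    rw [hdval, heval] at e0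
    simp only [hc] at e0
    have key : t * (1 + (Real.sqrt 3 - 1)^2) = 0 := by linear_combination (-1/4 : ℝ) * e0
    have hpos : (0:ℝ) < t * (1 + (Real.sqrt 3 - 1)^2) :=
      mul_pos htpos (by positivity)
    linarith
end

section
/- Let 0 < x < y and let P be the Type I polytope with vertices A, B, C, D, E, F. Then the exposed face of P in the direction n₁ = (0,0,−1), namely the set {p ∈ P : ∀ q ∈ P, ⟪n₁, q⟫ ≤ ⟪n₁, p⟫}, equals the rectangle convexHull{A, B, C, D}. -/
open Finset

theorem typeI_exposed_face_n1 (x y : ℝ) (hx : 0 < x) (hxy : x < y)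
    (A B C D E F : EuclideanSpace ℝ (Fin 3))
    (hA : A = !₂[y, -x, 0]) (hB : B = !₂[y, x, 0]) (hC : C = !₂[-y, x, 0])
    (hD : D = !₂[-y, -x, 0]) (hE : E = !₂[y - x, 0, x]) (hF : F = !₂[-(y - x), 0, x])
    (P : Set (EuclideanSpace ℝ (Fin 3)))
    (hP : P = convexHull ℝ {A, B, C, D, E, F})
    (n₁ : EuclideanSpace ℝ (Fin 3)) (hn₁ : n₁ = !₂[0, 0, -1]) :
    {p ∈ P | ∀ q ∈ P, (inner ℝ n₁ q : ℝ) ≤ inner ℝ n₁ p} =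
      convexHull ℝ {A, B, C, D} := by
  classical
  have hlin : IsLinearMap ℝ (fun q : EuclideanSpace ℝ (Fin 3) => q 2) :=
    ⟨fun _ _ => rfl, fun _ _ => rfl⟩
  have hinner : ∀ q : EuclideanSpace ℝ (Fin 3), (inner ℝ n₁ q : ℝ) = -(q 2) := by
    intro q; subst hn₁; simp [PiLp.inner_apply, Fin.sum_univ_three]
  -- every point of P has nonneg third coordinate
  have hPnn : ∀ q ∈ P, 0 ≤ q 2 := by
    rw [hP]
    intro q hq
    refine convexHull_min ?_ (convex_halfSpace_ge hlin 0) hq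
    rintro v (rfl | rfl | rfl | rfl | rfl | rfl) <;>
      simp [hA, hB, hC, hD, hE, hF, le_of_lt hx]
  -- every point of convexHull {A,B,C,D} has third coordinate 0
  have hzero : ∀ p ∈ convexHull ℝ ({A, B, C, D} : Set (EuclideanSpace ℝ (Fin 3))), p 2 = 0 := by
    intro p hp
    refine convexHull_min ?_ (convex_hyperplane hlin 0) hp
    rintro v (rfl | rfl | rfl | rfl) <;> simp [hA, hB, hC, hD]
  have hsub : convexHull ℝ ({A, B, C, D} : Set (EuclideanSpace ℝ (Fin 3))) ⊆ P := by
    rw [hP]; exact convexHull_mono (by intro v hv; simp at hv ⊢; tauto)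
  have hAP : A ∈ P := by
    rw [hP]; exact subset_convexHull ℝ _ (by simp)
  ext p
  simp only [Set.mem_setOf_eq]
  constructor
  · rintro ⟨hpP, hmax⟩
    -- p 2 = 0
    have h1 : (inner ℝ n₁ A : ℝ) ≤ inner ℝ n₁ p := hmax A hAP
    rw [hinner, hinner, hA] at h1
    have hA2 : (!₂[y, -x, 0] : EuclideanSpace ℝ (Fin 3)) 2 = 0 := by simp
    rw [hA2] at h1
    have hp2 : p 2 = 0 := le_antisymm (by linarith) (hPnn p hpP)
    -- now use the finset representation
    rw [hP] at hpP
    have hset : ({A, B, C, D, E, F} : Set (EuclideanSpace ℝ (Fin 3))) =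
        ↑({A, B, C, D, E, F} : Finset (EuclideanSpace ℝ (Fin 3))) := by simp
    rw [hset, Finset.convexHull_eq] at hpP
    obtain ⟨w, hw0, hw1, hwp⟩ := hpP
    set s : Finset (EuclideanSpace ℝ (Fin 3)) := {A, B, C, D, E, F} with hs
    have hps : p = ∑ v ∈ s, w v • v := by
      rw [← hwp, Finset.centerMass, hw1]; simp
    have hterm : ∀ v ∈ s, 0 ≤ w v * v 2 := by
      intro v hv
      refine mul_nonneg (hw0 v hv) ?_
      simp only [hs, Finset.mem_insert, Finset.mem_singleton] at hv
      rcases hv with rfl | rfl | rfl | rfl | rfl | rfl <;>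
        simp [hA, hB, hC, hD, hE, hF, le_of_lt hx]
    have hsum : ∑ v ∈ s, w v * v 2 = 0 := by
      have : p 2 = ∑ v ∈ s, w v * v 2 := by
        rw [hps]
        exact map_sum (IsLinearMap.mk' _ hlin) (fun v => w v • v) s
      rw [← this, hp2]
    have hall : ∀ v ∈ s, w v * v 2 = 0 :=
      (Finset.sum_eq_zero_iff_of_nonneg hterm).mp hsum
    -- weights vanish on E and F
    have hEF : ∀ v ∈ s, v 2 ≠ 0 → w v = 0 := by
      intro v hv hne
      have := hall v hv
      rcases mul_eq_zero.mp this with h | h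
      · exact h
      · exact absurd h hne
    set t : Finset (EuclideanSpace ℝ (Fin 3)) := s.filter (fun v => w v ≠ 0) with ht
    have htsub : ∀ v ∈ t, v ∈ ({A, B, C, D} : Set (EuclideanSpace ℝ (Fin 3))) := by
      intro v hv
      rw [ht, Finset.mem_filter] at hv
      obtain ⟨hvs, hwv⟩ := hv
      have hv2 : v 2 = 0 := by
        by_contra h
        exact hwv (hEF v hvs h)
      simp only [hs, Finset.mem_insert, Finset.mem_singleton] at hvs
      rcases hvs with rfl | rfl | rfl | rfl | rfl | rfl
      · simp
      · simp
      · simp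
      · simp
      · exfalso; rw [hE] at hv2; simp at hv2; exact ne_of_gt hx hv2
      · exfalso; rw [hF] at hv2; simp at hv2; exact ne_of_gt hx hv2
    have htw : ∑ v ∈ t, w v = 1 := by
      rw [ht, Finset.sum_filter_ne_zero, hw1]
    have htp : t.centerMass w id = p := by
      rw [Finset.centerMass, htw, hps]
      simp only [inv_one, one_smul, id]
      rw [ht]
      rw [Finset.sum_filter_of_ne]
      intro v hv hne
      intro hw
      exact hne (by rw [hw, zero_smul])
    rw [← htp]
    exact Finset.centerMass_mem_convexHull t
      (fun v hv => hw0 v (Finset.mem_filter.mp hv).1) (by rw [htw]; norm_num) htsub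
  · intro hp
    refine ⟨hsub hp, ?_⟩
    intro q hq
    rw [hinner, hinner, hzero p hp]
    linarith [hPnn q hq]
end

section
/- Let 0 < x < y and let P be the Type I polytope with vertices A, B, C, D, E, F. Then the exposed face of P in the direction n₂ = (1/√2, 0, 1/√2), namely the set {p ∈ P : ∀ q ∈ P, ⟪n₂, q⟫ ≤ ⟪n₂, p⟫}, equals the triangle convexHull{A, B, E}. -/
theorem typeI_exposed_face_n2 (x y : ℝ) (hx : 0 < x) (hxy : x < y)
    (A B C D E F : EuclideanSpace ℝ (Fin 3))
    (hA : A = ![y, -x, 0]) (hB : B = ![y, x, 0]) (hC : C = ![-y, x, 0])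
    (hD : D = ![-y, -x, 0]) (hE : E = ![y - x, 0, x]) (hF : F = ![-(y - x), 0, x])
    (P : Set (EuclideanSpace ℝ (Fin 3)))
    (hP : P = convexHull ℝ {A, B, C, D, E, F})
    (n₂ : EuclideanSpace ℝ (Fin 3))
    (hn₂ : n₂ = ![1 / Real.sqrt 2, 0, 1 / Real.sqrt 2]) :
    {p ∈ P | ∀ q ∈ P, (inner ℝ n₂ q : ℝ) ≤ inner ℝ n₂ p} =
      convexHull ℝ {A, B, E} := by
  set c : ℝ := 1 / Real.sqrt 2 with hc
  have hcpos : (0:ℝ) < c := by positivity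
  set f : EuclideanSpace ℝ (Fin 3) → ℝ := fun p => p 0 + p 2 with hf
  have hlin : IsLinearMap ℝ f := by
    constructor
    · intro a b; simp [hf]; ring
    · intro r a; simp [hf]; ring
  have hinner : ∀ p : EuclideanSpace ℝ (Fin 3),
      (inner ℝ n₂ p : ℝ) = c * f p := by
    intro p
    rw [PiLp.inner_apply, hn₂]
    simp [Fin.sum_univ_three, RCLike.inner_apply, hf, hc]
    ring
  have fA : f A = y := by simp [hf, hA]
  have fB : f B = y := by simp [hf, hB]
  have fC : f C = -y := by simp [hf, hC]
  have fD : f D = -y := by simp [hf, hD]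
  have fE : f E = y := by simp [hf, hE]
  have fF : f F = 2*x - y := by simp [hf, hF]; ring
  have hmax : ∀ q ∈ P, f q ≤ y := by
    rw [hP]
    refine fun q hq => convexHull_min ?_ (convex_halfSpace_le hlin y) hq
    rintro z hz
    simp only [Set.mem_insert_iff, Set.mem_singleton_iff] at hz
    rcases hz with rfl|rfl|rfl|rfl|rfl|rfl <;>
      simp only [Set.mem_setOf_eq, fA, fB, fC, fD, fE, fF] <;> linarith
  have heq : ∀ p ∈ convexHull ℝ ({A, B, E} : Set (EuclideanSpace ℝ (Fin 3))), f p = y := by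
    refine fun p hp => convexHull_min ?_ (convex_hyperplane hlin y) hp
    rintro z hz
    simp only [Set.mem_insert_iff, Set.mem_singleton_iff] at hz
    rcases hz with rfl|rfl|rfl <;> simp only [Set.mem_setOf_eq, fA, fB, fE]
  have hC' : ∀ v ∈ convexHull ℝ ({C, D, F} : Set (EuclideanSpace ℝ (Fin 3))),
      f v ≤ 2*x - y := by
    refine fun v hv => convexHull_min ?_ (convex_halfSpace_le hlin (2*x - y)) hv
    rintro z hz
    simp only [Set.mem_insert_iff, Set.mem_singleton_iff] at hz
    rcases hz with rfl|rfl|rfl <;>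
      simp only [Set.mem_setOf_eq, fC, fD, fF] <;> linarith
  have hsplit : ({A, B, C, D, E, F} : Set (EuclideanSpace ℝ (Fin 3)))
      = {A, B, E} ∪ {C, D, F} := by
    ext z
    simp only [Set.mem_insert_iff, Set.mem_singleton_iff, Set.mem_union]
    tauto
  have hjoin : P = convexJoin ℝ (convexHull ℝ ({A, B, E} : Set (EuclideanSpace ℝ (Fin 3))))
      (convexHull ℝ ({C, D, F} : Set (EuclideanSpace ℝ (Fin 3)))) := by
    rw [hP, hsplit, convexHull_union ⟨A, by simp⟩ ⟨C, by simp⟩]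
  have hAP : A ∈ P := by
    rw [hP]; exact subset_convexHull ℝ _ (by simp)
  ext p
  simp only [Set.mem_setOf_eq, Set.mem_sep_iff]
  constructor
  · rintro ⟨hpP, hopt⟩
    have hfp : f p = y := by
      refine le_antisymm (hmax p hpP) ?_
      have h1 := hopt A hAP
      rw [hinner, hinner] at h1
      have := le_of_mul_le_mul_left h1 hcpos
      rw [fA] at this
      exact this
    rw [hjoin] at hpP
    rw [mem_convexJoin] at hpP
    obtain ⟨u, hu, v, hv, a, b, ha, hb, hab, rfl⟩ := hpP
    have hfu : f u = y := heq u hu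
    have hfv : f v ≤ 2*x - y := hC' v hv
    have hcomb : a * f u + b * f v = y := by
      rw [← hfp, hlin.map_add, hlin.map_smul, hlin.map_smul]
      simp [smul_eq_mul]
    rcases hb.eq_or_lt with rfl|hbpos
    · have ha1 : a = 1 := by linarith
      subst ha1
      simpa using hu
    · exfalso
      have hfvy : f v < y := by linarith
      nlinarith [mul_lt_mul_of_pos_left hfvy hbpos]
  · intro hp
    refine ⟨?_, ?_⟩
    · rw [hP]
      refine convexHull_mono ?_ hp
      intro z hz
      simp only [Set.mem_insert_iff, Set.mem_singleton_iff] at hz ⊢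
      tauto
    · intro q hq
      rw [hinner, hinner, heq p hp]
      exact mul_le_mul_of_nonneg_left (hmax q hq) hcpos.le
end

section
/- Let 0 < x < y and let P be the Type I polytope with vertices A, B, C, D, E, F. Then for a unit vector n ∈ ℝ³, the exposed face of P in direction n, namely {p ∈ P : ∀ q ∈ P, ⟪n, q⟫ ≤ ⟪n, p⟫}, has affine dimension 2 (i.e., the dimension of the direction of its affine span equals 2) if and only if n ∈ {n₁, n₂, n₃, n₄, n₅}. In other words, n₁, …, n₅, and no other unit vectors, are outward face normals of P. -/
open RealInnerProductSpace Module

private lemma face_eq_hull {V : Type*} [NormedAddCommGroup V] [InnerProductSpace ℝ V]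
    (s : Set V) (hs : s.Finite) (n : V) :
    {p ∈ convexHull ℝ s | ∀ q ∈ convexHull ℝ s, ⟪n, q⟫ ≤ ⟪n, p⟫}
      = convexHull ℝ {v ∈ s | ∀ u ∈ s, ⟪n, u⟫ ≤ ⟪n, v⟫} := by
  set T : Set V := {v ∈ s | ∀ u ∈ s, ⟪n, u⟫ ≤ ⟪n, v⟫} with hT
  have hTs : T ⊆ s := fun v hv => hv.1
  have hlin : IsLinearMap ℝ fun q : V => ⟪n, q⟫ :=
    ⟨fun a b => inner_add_right _ _ _, fun c a => real_inner_smul_right _ _ _⟩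
  apply Set.Subset.antisymm
  · rintro p ⟨hp, hdom⟩
    rw [hs.convexHull_eq] at hp
    obtain ⟨w, hw0, hw1, hwc⟩ := hp
    have hMv : ∀ y ∈ s, ⟪n, y⟫ ≤ ⟪n, p⟫ := fun y hy => hdom y (subset_convexHull ℝ s hy)
    have hip : ⟪n, p⟫ = ∑ y ∈ hs.toFinset, w y * ⟪n, y⟫ := by
      have hp' : p = ∑ y ∈ hs.toFinset, w y • y := by
        rw [← hwc, Finset.centerMass_eq_of_sum_1 _ _ hw1]; rfl
      rw [hp', inner_sum]
      exact Finset.sum_congr rfl fun y _ => real_inner_smul_right _ _ _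
    have hsum : ∑ y ∈ hs.toFinset, w y * (⟪n, p⟫ - ⟪n, y⟫) = 0 := by
      simp only [mul_sub, Finset.sum_sub_distrib, ← Finset.sum_mul, hw1, one_mul, ← hip, sub_self]
    have hzero : ∀ y ∈ hs.toFinset, w y * (⟪n, p⟫ - ⟪n, y⟫) = 0 :=
      (Finset.sum_eq_zero_iff_of_nonneg (fun y hy =>
        mul_nonneg (hw0 y (hs.mem_toFinset.mp hy))
          (sub_nonneg.mpr (hMv y (hs.mem_toFinset.mp hy))))).mp hsum
    have hsupT : ∀ y ∈ hs.toFinset, w y ≠ 0 → y ∈ T := by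
      intro y hy hwy
      have hy' := hs.mem_toFinset.mp hy
      have : ⟪n, p⟫ - ⟪n, y⟫ = 0 := by
        rcases mul_eq_zero.mp (hzero y hy) with h | h
        · exact absurd h hwy
        · exact h
      have heq : (⟪n, p⟫ : ℝ) = ⟪n, y⟫ := sub_eq_zero.mp this
      refine ⟨hy', fun u hu => ?_⟩
      have := hMv u hu
      linarith
    rw [← hwc, ← Finset.centerMass_filter_ne_zero]
    apply Finset.centerMass_mem_convexHull
    · intro i hi
      exact hw0 i (hs.mem_toFinset.mp (Finset.mem_filter.mp hi).1)
    · rw [Finset.sum_filter_ne_zero hs.toFinset]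
      rw [hw1]; norm_num
    · intro i hi
      obtain ⟨hi1, hi2⟩ := Finset.mem_filter.mp hi
      exact hsupT i hi1 hi2
  · intro p hp
    rcases Set.eq_empty_or_nonempty T with hTe | ⟨v₀, hv₀⟩
    · rw [hTe] at hp; simp at hp
    have h1 : ∀ q ∈ convexHull ℝ s, ⟪n, q⟫ ≤ ⟪n, v₀⟫ := by
      apply convexHull_min _ (convex_halfSpace_le hlin _)
      exact fun u hu => hv₀.2 u hu
    have h2 : ⟪n, v₀⟫ ≤ ⟪n, p⟫ := by
      have : convexHull ℝ T ⊆ {q | ⟪n, v₀⟫ ≤ ⟪n, q⟫} := by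
        apply convexHull_min _ (convex_halfSpace_ge hlin _)
        exact fun u hu => hu.2 v₀ (hTs hv₀)
      exact this hp
    exact ⟨convexHull_mono hTs hp, fun q hq => le_trans (h1 q hq) h2⟩

private lemma rank_le_one_of_pair {V : Type*} [NormedAddCommGroup V] [InnerProductSpace ℝ V]
    [FiniteDimensional ℝ V] (s : Set V) (p q : V) (h : s ⊆ {p, q}) :
    finrank ℝ (vectorSpan ℝ s) ≤ 1 := by
  have h1 : vectorSpan ℝ s ≤ vectorSpan ℝ ({p, q} : Set V) := vectorSpan_mono ℝ h
  have h2 : vectorSpan ℝ ({p, q} : Set V) = ℝ ∙ (p -ᵥ q) := vectorSpan_pair ℝ p q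
  calc finrank ℝ (vectorSpan ℝ s) ≤ finrank ℝ (vectorSpan ℝ ({p, q} : Set V)) :=
        Submodule.finrank_mono h1
    _ ≤ 1 := by
        rw [h2]
        exact (finrank_span_le_card ({p -ᵥ q} : Set V)).trans (by simp)

private lemma rank_two_of {V : Type*} [NormedAddCommGroup V] [InnerProductSpace ℝ V]
    [FiniteDimensional ℝ V] (s : Set V) (p q₁ q₂ : V) (hp : p ∈ s)
    (hq₁ : q₁ ∈ s) (hq₂ : q₂ ∈ s)
    (hcomb : ∀ w ∈ s, ∃ r t : ℝ, p - w = r • (p - q₁) + t • (p - q₂))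
    (hind : LinearIndependent ℝ ![p - q₁, p - q₂]) :
    finrank ℝ (vectorSpan ℝ s) = 2 := by
  have key : vectorSpan ℝ s = Submodule.span ℝ {p - q₁, p - q₂} := by
    rw [vectorSpan_eq_span_vsub_set_left ℝ hp]
    apply le_antisymm
    · rw [Submodule.span_le]
      rintro z ⟨w, hw, rfl⟩
      obtain ⟨r, t, hrt⟩ := hcomb w hw
      exact Submodule.mem_span_pair.mpr ⟨r, t, by rw [← hrt]; rfl⟩
    · rw [Submodule.span_le]
      rintro z (rfl | rfl)
      · exact Submodule.subset_span ⟨q₁, hq₁, rfl⟩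
      · exact Submodule.subset_span ⟨q₂, hq₂, rfl⟩
  rw [key]
  have h := finrank_span_eq_card hind
  have hr : Set.range ![p - q₁, p - q₂] = {p - q₁, p - q₂} := by
    simp [Matrix.range_cons, Matrix.range_empty, Set.pair_comm]
  rw [hr] at h
  rw [h]; rfl

set_option maxHeartbeats 4000000

theorem typeI_face_normals (x y : ℝ) (hx : 0 < x) (hxy : x < y)
    (A B C D E F : EuclideanSpace ℝ (Fin 3))
    (hA : A = !₂[y, -x, 0]) (hB : B = !₂[y, x, 0]) (hC : C = !₂[-y, x, 0])
    (hD : D = !₂[-y, -x, 0]) (hE : E = !₂[y - x, 0, x]) (hF : F = !₂[-(y - x), 0, x])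
    (P : Set (EuclideanSpace ℝ (Fin 3)))
    (hP : P = convexHull ℝ {A, B, C, D, E, F})
    (n₁ n₂ n₃ n₄ n₅ : EuclideanSpace ℝ (Fin 3))
    (hn₁ : n₁ = !₂[0, 0, -1])
    (hn₂ : n₂ = !₂[1 / Real.sqrt 2, 0, 1 / Real.sqrt 2])
    (hn₃ : n₃ = !₂[-(1 / Real.sqrt 2), 0, 1 / Real.sqrt 2])
    (hn₄ : n₄ = !₂[0, 1 / Real.sqrt 2, 1 / Real.sqrt 2])
    (hn₅ : n₅ = !₂[0, -(1 / Real.sqrt 2), 1 / Real.sqrt 2])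
    (n : EuclideanSpace ℝ (Fin 3)) (hn : ‖n‖ = 1) :
    Module.finrank ℝ
        (affineSpan ℝ {p ∈ P | ∀ q ∈ P, (inner ℝ n q : ℝ) ≤ inner ℝ n p}).direction = 2 ↔
      n ∈ ({n₁, n₂, n₃, n₄, n₅} : Set (EuclideanSpace ℝ (Fin 3))) := by
  have hfin : ({A, B, C, D, E, F} : Set (EuclideanSpace ℝ (Fin 3))).Finite :=
    Set.toFinite _
  rw [hP, face_eq_hull _ hfin n, affineSpan_convexHull, direction_affineSpan]
  obtain ⟨a, b, c, hnabc⟩ : ∃ p q r : ℝ, n = !₂[p, q, r] :=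
    ⟨n 0, n 1, n 2, by ext i; fin_cases i <;> rfl⟩
  set T : Set (EuclideanSpace ℝ (Fin 3)) :=
    {v ∈ ({A, B, C, D, E, F} : Set (EuclideanSpace ℝ (Fin 3))) |
      ∀ u ∈ ({A, B, C, D, E, F} : Set (EuclideanSpace ℝ (Fin 3))), ⟪n, u⟫ ≤ ⟪n, v⟫} with hTdef
  have hy : (0:ℝ) < y := lt_trans hx hxy
  have hyx : (0:ℝ) < y - x := by linarith
  have hxne : x ≠ 0 := ne_of_gt hx
  have hr0 : (0:ℝ) < 1 / Real.sqrt 2 := by positivity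
  have hrsq : (1 / Real.sqrt 2) ^ 2 = 1 / 2 := by
    rw [div_pow, Real.sq_sqrt (by norm_num : (0:ℝ) ≤ 2)]; norm_num
  have habc : a ^ 2 + b ^ 2 + c ^ 2 = 1 := by
    have h := hn
    rw [hnabc, EuclideanSpace.norm_eq] at h
    have h2 : (∑ i, ‖(!₂[a, b, c] : EuclideanSpace ℝ (Fin 3)) i‖ ^ 2) = 1 := by
      simpa using Real.sqrt_eq_one.mp h
    rw [Fin.sum_univ_three] at h2
    simpa [Real.norm_eq_abs, sq_abs] using h2
  have hiA : ⟪n, A⟫ = y * a - x * b := by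
    simp [hnabc, hA, PiLp.inner_apply, Fin.sum_univ_three, RCLike.inner_apply]; ring
  have hiB : ⟪n, B⟫ = y * a + x * b := by
    simp [hnabc, hB, PiLp.inner_apply, Fin.sum_univ_three, RCLike.inner_apply]
  have hiC : ⟪n, C⟫ = -(y * a) + x * b := by
    simp [hnabc, hC, PiLp.inner_apply, Fin.sum_univ_three, RCLike.inner_apply]
  have hiD : ⟪n, D⟫ = -(y * a) - x * b := by
    simp [hnabc, hD, PiLp.inner_apply, Fin.sum_univ_three, RCLike.inner_apply]; ring
  have hiE : ⟪n, E⟫ = (y - x) * a + x * c := by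
    simp [hnabc, hE, PiLp.inner_apply, Fin.sum_univ_three, RCLike.inner_apply]
  have hiF : ⟪n, F⟫ = -((y - x) * a) + x * c := by
    simp [hnabc, hF, PiLp.inner_apply, Fin.sum_univ_three, RCLike.inner_apply]; ring
  have hmemT : ∀ v, v ∈ T ↔
      ((v = A ∨ v = B ∨ v = C ∨ v = D ∨ v = E ∨ v = F) ∧
        (⟪n, A⟫ ≤ ⟪n, v⟫ ∧ ⟪n, B⟫ ≤ ⟪n, v⟫ ∧ ⟪n, C⟫ ≤ ⟪n, v⟫ ∧
         ⟪n, D⟫ ≤ ⟪n, v⟫ ∧ ⟪n, E⟫ ≤ ⟪n, v⟫ ∧ ⟪n, F⟫ ≤ ⟪n, v⟫)) := by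
    intro v
    simp only [hTdef, Set.mem_setOf_eq, Set.mem_insert_iff, Set.mem_singleton_iff,
      forall_eq_or_imp, forall_eq]
  have hvert : ∀ v, v ∈ T → (v = A ∨ v = B ∨ v = C ∨ v = D ∨ v = E ∨ v = F) :=
    fun v hv => ((hmemT v).mp hv).1
  constructor
  · -- forward direction
    intro hdim
    simp only [Set.mem_insert_iff, Set.mem_singleton_iff]
    have hhalf : ∀ t : ℝ, t ^ 2 = 1 / 2 → 0 ≤ t → t = 1 / Real.sqrt 2 := by
      intro t ht ht0
      exact (pow_left_inj₀ ht0 (le_of_lt hr0) two_ne_zero).mp (by rw [ht, hrsq])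
    have hrank1 : ∀ p q : EuclideanSpace ℝ (Fin 3), T ⊆ {p, q} → False := by
      intro p q hsub
      have := rank_le_one_of_pair T p q hsub
      omega
    have hdA : A ∈ T → (y * a + x * b ≤ y * a - x * b ∧ -(y * a) + x * b ≤ y * a - x * b ∧
        -(y * a) - x * b ≤ y * a - x * b ∧ (y - x) * a + x * c ≤ y * a - x * b ∧
        -((y - x) * a) + x * c ≤ y * a - x * b) := by
      intro h
      have h' := ((hmemT A).mp h).2
      rw [hiA, hiB, hiC, hiD, hiE, hiF] at h'
      exact ⟨h'.2.1, h'.2.2.1, h'.2.2.2.1, h'.2.2.2.2.1, h'.2.2.2.2.2⟩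
    have hdB : B ∈ T → (y * a - x * b ≤ y * a + x * b ∧ -(y * a) + x * b ≤ y * a + x * b ∧
        -(y * a) - x * b ≤ y * a + x * b ∧ (y - x) * a + x * c ≤ y * a + x * b ∧
        -((y - x) * a) + x * c ≤ y * a + x * b) := by
      intro h
      have h' := ((hmemT B).mp h).2
      rw [hiA, hiB, hiC, hiD, hiE, hiF] at h'
      exact ⟨h'.1, h'.2.2.1, h'.2.2.2.1, h'.2.2.2.2.1, h'.2.2.2.2.2⟩
    have hdC : C ∈ T → (y * a - x * b ≤ -(y * a) + x * b ∧ y * a + x * b ≤ -(y * a) + x * b ∧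
        -(y * a) - x * b ≤ -(y * a) + x * b ∧ (y - x) * a + x * c ≤ -(y * a) + x * b ∧
        -((y - x) * a) + x * c ≤ -(y * a) + x * b) := by
      intro h
      have h' := ((hmemT C).mp h).2
      rw [hiA, hiB, hiC, hiD, hiE, hiF] at h'
      exact ⟨h'.1, h'.2.1, h'.2.2.2.1, h'.2.2.2.2.1, h'.2.2.2.2.2⟩
    have hdD : D ∈ T → (y * a - x * b ≤ -(y * a) - x * b ∧ y * a + x * b ≤ -(y * a) - x * b ∧
        -(y * a) + x * b ≤ -(y * a) - x * b ∧ (y - x) * a + x * c ≤ -(y * a) - x * b ∧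
        -((y - x) * a) + x * c ≤ -(y * a) - x * b) := by
      intro h
      have h' := ((hmemT D).mp h).2
      rw [hiA, hiB, hiC, hiD, hiE, hiF] at h'
      exact ⟨h'.1, h'.2.1, h'.2.2.1, h'.2.2.2.2.1, h'.2.2.2.2.2⟩
    have hdE : E ∈ T → (y * a - x * b ≤ (y - x) * a + x * c ∧ y * a + x * b ≤ (y - x) * a + x * c ∧
        -(y * a) + x * b ≤ (y - x) * a + x * c ∧ -(y * a) - x * b ≤ (y - x) * a + x * c ∧
        -((y - x) * a) + x * c ≤ (y - x) * a + x * c) := by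
      intro h
      have h' := ((hmemT E).mp h).2
      rw [hiA, hiB, hiC, hiD, hiE, hiF] at h'
      exact ⟨h'.1, h'.2.1, h'.2.2.1, h'.2.2.2.1, h'.2.2.2.2.2⟩
    have hdF : F ∈ T → (y * a - x * b ≤ -((y - x) * a) + x * c ∧
        y * a + x * b ≤ -((y - x) * a) + x * c ∧ -(y * a) + x * b ≤ -((y - x) * a) + x * c ∧
        -(y * a) - x * b ≤ -((y - x) * a) + x * c ∧ (y - x) * a + x * c ≤ -((y - x) * a) + x * c) := by
      intro h
      have h' := ((hmemT F).mp h).2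
      rw [hiA, hiB, hiC, hiD, hiE, hiF] at h'
      exact ⟨h'.1, h'.2.1, h'.2.2.1, h'.2.2.2.1, h'.2.2.2.2.1⟩
    have hFmem : a = 0 → E ∈ T → F ∈ T := by
      intro ha0 hEm
      have h' := ((hmemT E).mp hEm).2
      have heq : ⟪n, F⟫ = ⟪n, E⟫ := by rw [hiE, hiF, ha0]; ring
      refine (hmemT F).mpr ⟨by tauto, ?_⟩
      rw [heq]
      exact ⟨h'.1, h'.2.1, h'.2.2.1, h'.2.2.2.1, h'.2.2.2.2.1, h'.2.2.2.2.1⟩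
    have hEmem : a = 0 → F ∈ T → E ∈ T := by
      intro ha0 hFm
      have h' := ((hmemT F).mp hFm).2
      have heq : ⟪n, E⟫ = ⟪n, F⟫ := by rw [hiE, hiF, ha0]; ring
      refine (hmemT E).mpr ⟨by tauto, ?_⟩
      rw [heq]
      exact ⟨h'.1, h'.2.1, h'.2.2.1, h'.2.2.2.1, h'.2.2.2.2.2, h'.2.2.2.2.2⟩
    by_cases hEm : E ∈ T <;> by_cases hFm : F ∈ T
    · -- E ∈ T, F ∈ T : a = 0, normal is n₄ or n₅
      have ha0 : a = 0 := by
        have h1 := (hdE hEm).2.2.2.2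
        have h2 := (hdF hFm).2.2.2.2
        have h3 : (y - x) * a = 0 := by linarith
        exact (mul_eq_zero.mp h3).resolve_left (ne_of_gt hyx)
      have hor : A ∈ T ∨ B ∈ T ∨ C ∈ T ∨ D ∈ T := by
        by_contra hcon
        push_neg at hcon
        obtain ⟨hnA, hnB, hnC, hnD⟩ := hcon
        refine hrank1 E F (fun v hv => ?_)
        rcases hvert v hv with rfl | rfl | rfl | rfl | rfl | rfl
        · exact absurd hv hnA
        · exact absurd hv hnB
        · exact absurd hv hnC
        · exact absurd hv hnD
        · exact Set.mem_insert _ _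
        · exact Set.mem_insert_of_mem _ rfl
      have hfin5 : b ≤ 0 → x * c = x * (-b) → (n = n₁ ∨ n = n₂ ∨ n = n₃ ∨ n = n₄ ∨ n = n₅) := by
        intro hble hc
        have hcb : c = -b := mul_left_cancel₀ hxne hc
        rw [ha0, hcb] at habc
        have hb2 : (-b) ^ 2 = 1 / 2 := by linarith [habc]
        have hbv : -b = 1 / Real.sqrt 2 := hhalf _ hb2 (by linarith)
        have hb' : b = -(1 / Real.sqrt 2) := by linarith
        have hc' : c = 1 / Real.sqrt 2 := by rw [hcb, hb']; ring
        exact Or.inr (Or.inr (Or.inr (Or.inr (by rw [hnabc, hn₅, ha0, hb', hc']))))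
      have hfin4 : 0 ≤ b → x * c = x * b → (n = n₁ ∨ n = n₂ ∨ n = n₃ ∨ n = n₄ ∨ n = n₅) := by
        intro hbge hc
        have hcb : c = b := mul_left_cancel₀ hxne hc
        rw [ha0, hcb] at habc
        have hb2 : b ^ 2 = 1 / 2 := by linarith [habc]
        have hb' : b = 1 / Real.sqrt 2 := hhalf _ hb2 hbge
        have hc' : c = 1 / Real.sqrt 2 := by rw [hcb, hb']
        exact Or.inr (Or.inr (Or.inr (Or.inl (by rw [hnabc, hn₄, ha0, hb', hc']))))
      rcases hor with hAm | hBm | hCm | hDm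
      · have hd := hdA hAm
        have hble : b ≤ 0 := le_of_mul_le_mul_left (by linarith [hd.1] : x * b ≤ x * 0) hx
        refine hfin5 hble ?_
        have e1 := hd.2.2.2.1
        have e2 := (hdE hEm).1
        rw [ha0] at e1 e2
        linarith
      · have hd := hdB hBm
        have hbge : 0 ≤ b := le_of_mul_le_mul_left (by linarith [hd.1] : x * 0 ≤ x * b) hx
        refine hfin4 hbge ?_
        have e1 := hd.2.2.2.1
        have e2 := (hdE hEm).2.1
        rw [ha0] at e1 e2
        linarith
      · have hd := hdC hCm
        have hbge : 0 ≤ b := le_of_mul_le_mul_left (by linarith [hd.2.2.1] : x * 0 ≤ x * b) hx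
        refine hfin4 hbge ?_
        have e1 := hd.2.2.2.1
        have e2 := (hdE hEm).2.2.1
        rw [ha0] at e1 e2
        linarith
      · have hd := hdD hDm
        have hble : b ≤ 0 := le_of_mul_le_mul_left (by linarith [hd.2.2.1] : x * b ≤ x * 0) hx
        refine hfin5 hble ?_
        have e1 := hd.2.2.2.1
        have e2 := (hdE hEm).2.2.2.1
        rw [ha0] at e1 e2
        linarith
    · -- E ∈ T, F ∉ T : normal is n₂
      have hAB : A ∈ T → B ∈ T → (n = n₁ ∨ n = n₂ ∨ n = n₃ ∨ n = n₄ ∨ n = n₅) := by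
        intro hAm hBm
        have hdA' := hdA hAm
        have hdB' := hdB hBm
        have hb0 : b = 0 := by
          have h3 : x * b = 0 := by linarith [hdA'.1, hdB'.1]
          exact (mul_eq_zero.mp h3).resolve_left hxne
        have hca : c = a := by
          have e1 := hdA'.2.2.2.1
          have e2 := (hdE hEm).1
          rw [hb0] at e1 e2
          have h3 : x * c = x * a := by linarith
          exact mul_left_cancel₀ hxne h3
        have hage : 0 ≤ a := by
          have h5 := hdA'.2.1
          rw [hb0] at h5
          exact le_of_mul_le_mul_left (by linarith : y * 0 ≤ y * a) hy
        rw [hb0, hca] at habc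
        have ha2 : a ^ 2 = 1 / 2 := by linarith [habc]
        have ha' : a = 1 / Real.sqrt 2 := hhalf _ ha2 hage
        exact Or.inr (Or.inl (by rw [hnabc, hn₂, hca, ha', hb0]))
      have hAC : A ∈ T → C ∈ T → (n = n₁ ∨ n = n₂ ∨ n = n₃ ∨ n = n₄ ∨ n = n₅) := by
        intro hAm hCm
        have hdA' := hdA hAm
        have hdC' := hdC hCm
        have hble : b ≤ 0 := le_of_mul_le_mul_left (by linarith [hdA'.1] : x * b ≤ x * 0) hx
        have hage : 0 ≤ a := le_of_mul_le_mul_left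
          (by linarith [hdA'.2.2.1] : y * 0 ≤ y * a) hy
        have hya : y * a = x * b := by linarith [hdA'.2.1, hdC'.1]
        have hxb : 0 ≤ x * (-b) := mul_nonneg hx.le (by linarith)
        have ha0 : a = 0 := by
          have hyap : y * a ≤ y * 0 := by linarith
          exact le_antisymm (le_of_mul_le_mul_left hyap hy) hage
        have hb0 : b = 0 := by
          have h3 : x * b = 0 := by rw [ha0] at hya; linarith
          exact (mul_eq_zero.mp h3).resolve_left hxne
        have hc0 : c = 0 := by
          have e1 := hdA'.2.2.2.1
          have e2 := (hdE hEm).1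
          rw [ha0, hb0] at e1 e2
          have h3 : x * c = 0 := by linarith
          exact (mul_eq_zero.mp h3).resolve_left hxne
        exact absurd habc (by rw [ha0, hb0, hc0]; norm_num)
      have hAD : A ∈ T → D ∈ T → False := by
        intro hAm hDm
        have h1 := (hdA hAm).2.2.1
        have h2 := (hdD hDm).1
        have ha0 : a = 0 := by
          have h3 : y * a = 0 := by linarith
          exact (mul_eq_zero.mp h3).resolve_left (ne_of_gt hy)
        exact hFm (hFmem ha0 hEm)
      have hBC : B ∈ T → C ∈ T → False := by
        intro hBm hCm
        have h1 := (hdB hBm).2.1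
        have h2 := (hdC hCm).2.1
        have ha0 : a = 0 := by
          have h3 : y * a = 0 := by linarith
          exact (mul_eq_zero.mp h3).resolve_left (ne_of_gt hy)
        exact hFm (hFmem ha0 hEm)
      have hBD : B ∈ T → D ∈ T → False := by
        intro hBm hDm
        have h1 := (hdB hBm).2.2.1
        have h2 := (hdD hDm).2.1
        have hbge : 0 ≤ b := le_of_mul_le_mul_left
          (by linarith [(hdB hBm).1] : x * 0 ≤ x * b) hx
        have hage : 0 ≤ a := le_of_mul_le_mul_left
          (by linarith [(hdB hBm).2.1] : y * 0 ≤ y * a) hy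
        have hxb : 0 ≤ x * b := mul_nonneg hx.le hbge
        have ha0 : a = 0 := by
          have hyap : y * a ≤ y * 0 := by linarith
          exact le_antisymm (le_of_mul_le_mul_left hyap hy) hage
        exact hFm (hFmem ha0 hEm)
      have hCD : C ∈ T → D ∈ T → False := by
        intro hCm hDm
        have h1 := (hdC hCm).2.2.1
        have h2 := (hdD hDm).2.2.1
        have h4 := (hdE hEm).2.2.2.2
        have hage : 0 ≤ a := le_of_mul_le_mul_left
          (by linarith : (y - x) * 0 ≤ (y - x) * a) hyx
        have hb0 : b = 0 := by
          have h5 : x * b = 0 := by linarith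
          exact (mul_eq_zero.mp h5).resolve_left hxne
        have h3 := (hdC hCm).1
        rw [hb0] at h3
        have hale : a ≤ 0 := le_of_mul_le_mul_left (by linarith : y * a ≤ y * 0) hy
        exact hFm (hFmem (le_antisymm hale hage) hEm)
      by_cases hAm : A ∈ T <;> by_cases hBm : B ∈ T <;>
        by_cases hCm : C ∈ T <;> by_cases hDm : D ∈ T
      · exact hAB hAm hBm
      · exact hAB hAm hBm
      · exact hAB hAm hBm
      · exact hAB hAm hBm
      · exact hAC hAm hCm
      · exact hAC hAm hCm
      · exact absurd (hAD hAm hDm) not_false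
      · exact hrank1 E A (fun v hv => by
          rcases hvert v hv with rfl | rfl | rfl | rfl | rfl | rfl <;>
            first
              | exact Set.mem_insert _ _
              | exact Set.mem_insert_of_mem _ rfl
              | exact absurd hv (by assumption)) |>.elim
      · exact absurd (hBC hBm hCm) not_false
      · exact absurd (hBC hBm hCm) not_false
      · exact absurd (hBD hBm hDm) not_false
      · exact hrank1 E B (fun v hv => by
          rcases hvert v hv with rfl | rfl | rfl | rfl | rfl | rfl <;>
            first
              | exact Set.mem_insert _ _
              | exact Set.mem_insert_of_mem _ rfl
              | exact absurd hv (by assumption)) |>.elim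
      · exact absurd (hCD hCm hDm) not_false
      · exact hrank1 E C (fun v hv => by
          rcases hvert v hv with rfl | rfl | rfl | rfl | rfl | rfl <;>
            first
              | exact Set.mem_insert _ _
              | exact Set.mem_insert_of_mem _ rfl
              | exact absurd hv (by assumption)) |>.elim
      · exact hrank1 E D (fun v hv => by
          rcases hvert v hv with rfl | rfl | rfl | rfl | rfl | rfl <;>
            first
              | exact Set.mem_insert _ _
              | exact Set.mem_insert_of_mem _ rfl
              | exact absurd hv (by assumption)) |>.elim
      · exact hrank1 E E (fun v hv => by
          rcases hvert v hv with rfl | rfl | rfl | rfl | rfl | rfl <;>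
            first
              | exact Set.mem_insert _ _
              | exact Set.mem_insert_of_mem _ rfl
              | exact absurd hv (by assumption)) |>.elim
    · -- E ∉ T, F ∈ T : normal is n₃
      have hAB : A ∈ T → B ∈ T → False := by
        intro hAm hBm
        have hdA' := hdA hAm
        have hdB' := hdB hBm
        have hb0 : b = 0 := by
          have h3 : x * b = 0 := by linarith [hdA'.1, hdB'.1]
          exact (mul_eq_zero.mp h3).resolve_left hxne
        have hage : 0 ≤ a := by
          have h5 := hdA'.2.1
          rw [hb0] at h5
          exact le_of_mul_le_mul_left (by linarith : y * 0 ≤ y * a) hy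
        have h4 := (hdF hFm).2.2.2.2
        have hale : a ≤ 0 := le_of_mul_le_mul_left
          (by linarith : (y - x) * a ≤ (y - x) * 0) hyx
        exact hEm (hEmem (le_antisymm hale hage) hFm)
      have hAC : A ∈ T → C ∈ T → False := by
        intro hAm hCm
        have hdA' := hdA hAm
        have hdC' := hdC hCm
        have hble : b ≤ 0 := le_of_mul_le_mul_left (by linarith [hdA'.1] : x * b ≤ x * 0) hx
        have hage : 0 ≤ a := le_of_mul_le_mul_left
          (by linarith [hdA'.2.2.1] : y * 0 ≤ y * a) hy
        have hya : y * a = x * b := by linarith [hdA'.2.1, hdC'.1]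
        have hxb : 0 ≤ x * (-b) := mul_nonneg hx.le (by linarith)
        have ha0 : a = 0 := by
          have hyap : y * a ≤ y * 0 := by linarith
          exact le_antisymm (le_of_mul_le_mul_left hyap hy) hage
        exact hEm (hEmem ha0 hFm)
      have hAD : A ∈ T → D ∈ T → False := by
        intro hAm hDm
        have h1 := (hdA hAm).2.2.1
        have h2 := (hdD hDm).1
        have ha0 : a = 0 := by
          have h3 : y * a = 0 := by linarith
          exact (mul_eq_zero.mp h3).resolve_left (ne_of_gt hy)
        exact hEm (hEmem ha0 hFm)
      have hBC : B ∈ T → C ∈ T → False := by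
        intro hBm hCm
        have h1 := (hdB hBm).2.1
        have h2 := (hdC hCm).2.1
        have ha0 : a = 0 := by
          have h3 : y * a = 0 := by linarith
          exact (mul_eq_zero.mp h3).resolve_left (ne_of_gt hy)
        exact hEm (hEmem ha0 hFm)
      have hBD : B ∈ T → D ∈ T → False := by
        intro hBm hDm
        have h1 := (hdB hBm).2.2.1
        have h2 := (hdD hDm).2.1
        have hbge : 0 ≤ b := le_of_mul_le_mul_left
          (by linarith [(hdB hBm).1] : x * 0 ≤ x * b) hx
        have hage : 0 ≤ a := le_of_mul_le_mul_left
          (by linarith [(hdB hBm).2.1] : y * 0 ≤ y * a) hy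
        have hxb : 0 ≤ x * b := mul_nonneg hx.le hbge
        have ha0 : a = 0 := by
          have hyap : y * a ≤ y * 0 := by linarith
          exact le_antisymm (le_of_mul_le_mul_left hyap hy) hage
        exact hEm (hEmem ha0 hFm)
      have hCD : C ∈ T → D ∈ T → (n = n₁ ∨ n = n₂ ∨ n = n₃ ∨ n = n₄ ∨ n = n₅) := by
        intro hCm hDm
        have hdC' := hdC hCm
        have hdD' := hdD hDm
        have hb0 : b = 0 := by
          have h3 : x * b = 0 := by linarith [hdC'.2.2.1, hdD'.2.2.1]
          exact (mul_eq_zero.mp h3).resolve_left hxne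
        have h3 := hdC'.1
        rw [hb0] at h3
        have hale : a ≤ 0 := le_of_mul_le_mul_left (by linarith : y * a ≤ y * 0) hy
        have hca : c = -a := by
          have e1 := hdC'.2.2.2.2
          have e2 := (hdF hFm).2.2.1
          rw [hb0] at e1 e2
          have h5 : x * c = x * (-a) := by linarith
          exact mul_left_cancel₀ hxne h5
        rw [hb0, hca] at habc
        have ha2 : (-a) ^ 2 = 1 / 2 := by linarith [habc]
        have hav : -a = 1 / Real.sqrt 2 := hhalf _ ha2 (by linarith)
        have ha' : a = -(1 / Real.sqrt 2) := by linarith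
        have hc' : c = 1 / Real.sqrt 2 := by rw [hca, ha']; ring
        exact Or.inr (Or.inr (Or.inl (by rw [hnabc, hn₃, ha', hb0, hc'])))
      by_cases hAm : A ∈ T <;> by_cases hBm : B ∈ T <;>
        by_cases hCm : C ∈ T <;> by_cases hDm : D ∈ T
      · exact absurd (hAB hAm hBm) not_false
      · exact absurd (hAB hAm hBm) not_false
      · exact absurd (hAB hAm hBm) not_false
      · exact absurd (hAB hAm hBm) not_false
      · exact absurd (hAC hAm hCm) not_false
      · exact absurd (hAC hAm hCm) not_false
      · exact absurd (hAD hAm hDm) not_false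
      · exact hrank1 F A (fun v hv => by
          rcases hvert v hv with rfl | rfl | rfl | rfl | rfl | rfl <;>
            first
              | exact Set.mem_insert _ _
              | exact Set.mem_insert_of_mem _ rfl
              | exact absurd hv (by assumption)) |>.elim
      · exact absurd (hBC hBm hCm) not_false
      · exact absurd (hBC hBm hCm) not_false
      · exact absurd (hBD hBm hDm) not_false
      · exact hrank1 F B (fun v hv => by
          rcases hvert v hv with rfl | rfl | rfl | rfl | rfl | rfl <;>
            first
              | exact Set.mem_insert _ _
              | exact Set.mem_insert_of_mem _ rfl
              | exact absurd hv (by assumption)) |>.elim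
      · exact hCD hCm hDm
      · exact hrank1 F C (fun v hv => by
          rcases hvert v hv with rfl | rfl | rfl | rfl | rfl | rfl <;>
            first
              | exact Set.mem_insert _ _
              | exact Set.mem_insert_of_mem _ rfl
              | exact absurd hv (by assumption)) |>.elim
      · exact hrank1 F D (fun v hv => by
          rcases hvert v hv with rfl | rfl | rfl | rfl | rfl | rfl <;>
            first
              | exact Set.mem_insert _ _
              | exact Set.mem_insert_of_mem _ rfl
              | exact absurd hv (by assumption)) |>.elim
      · exact hrank1 F F (fun v hv => by
          rcases hvert v hv with rfl | rfl | rfl | rfl | rfl | rfl <;>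
            first
              | exact Set.mem_insert _ _
              | exact Set.mem_insert_of_mem _ rfl
              | exact absurd hv (by assumption)) |>.elim
    · -- E ∉ T, F ∉ T : normal is n₁
      have hAC : A ∈ T → C ∈ T → (n = n₁ ∨ n = n₂ ∨ n = n₃ ∨ n = n₄ ∨ n = n₅) := by
        intro hAm hCm
        have hdA' := hdA hAm
        have hdC' := hdC hCm
        have hble : b ≤ 0 := le_of_mul_le_mul_left (by linarith [hdA'.1] : x * b ≤ x * 0) hx
        have hage : 0 ≤ a := le_of_mul_le_mul_left
          (by linarith [hdA'.2.2.1] : y * 0 ≤ y * a) hy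
        have hya : y * a = x * b := by linarith [hdA'.2.1, hdC'.1]
        have hxb : 0 ≤ x * (-b) := mul_nonneg hx.le (by linarith)
        have ha0 : a = 0 := by
          have hyap : y * a ≤ y * 0 := by linarith
          exact le_antisymm (le_of_mul_le_mul_left hyap hy) hage
        have hb0 : b = 0 := by
          have h3 : x * b = 0 := by rw [ha0] at hya; linarith
          exact (mul_eq_zero.mp h3).resolve_left hxne
        have hcle : c ≤ 0 := by
          have e1 := hdA'.2.2.2.1
          rw [ha0, hb0] at e1
          exact le_of_mul_le_mul_left (by linarith : x * c ≤ x * 0) hx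
        rw [ha0, hb0] at habc
        have hc2 : (c - 1) * (c + 1) = 0 := by linarith [habc]
        have hc1 : c = -1 := by
          rcases mul_eq_zero.mp hc2 with h' | h'
          · exfalso
            have hcc : c = 1 := by linarith
            linarith
          · linarith
        exact Or.inl (by rw [hnabc, hn₁, ha0, hb0, hc1])
      have hBD : B ∈ T → D ∈ T → (n = n₁ ∨ n = n₂ ∨ n = n₃ ∨ n = n₄ ∨ n = n₅) := by
        intro hBm hDm
        have hdB' := hdB hBm
        have hdD' := hdD hDm
        have hbge : 0 ≤ b := le_of_mul_le_mul_left (by linarith [hdB'.1] : x * 0 ≤ x * b) hx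
        have hage : 0 ≤ a := le_of_mul_le_mul_left
          (by linarith [hdB'.2.1] : y * 0 ≤ y * a) hy
        have hxb : 0 ≤ x * b := mul_nonneg hx.le hbge
        have ha0 : a = 0 := by
          have hyap : y * a ≤ y * 0 := by linarith [hdB'.2.2.1]
          exact le_antisymm (le_of_mul_le_mul_left hyap hy) hage
        have hb0 : b = 0 := by
          have h4 := hdB'.2.2.1
          rw [ha0] at h4
          have h3 : x * b = 0 := by linarith
          exact (mul_eq_zero.mp h3).resolve_left hxne
        have hcle : c ≤ 0 := by
          have e1 := hdB'.2.2.2.1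
          rw [ha0, hb0] at e1
          exact le_of_mul_le_mul_left (by linarith : x * c ≤ x * 0) hx
        rw [ha0, hb0] at habc
        have hc2 : (c - 1) * (c + 1) = 0 := by linarith [habc]
        have hc1 : c = -1 := by
          rcases mul_eq_zero.mp hc2 with h' | h'
          · exfalso
            have hcc : c = 1 := by linarith
            linarith
          · linarith
        exact Or.inl (by rw [hnabc, hn₁, ha0, hb0, hc1])
      by_cases hAm : A ∈ T <;> by_cases hBm : B ∈ T <;>
        by_cases hCm : C ∈ T <;> by_cases hDm : D ∈ T
      · exact hAC hAm hCm
      · exact hAC hAm hCm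
      · exact hBD hBm hDm
      · exact hrank1 A B (fun v hv => by
          rcases hvert v hv with rfl | rfl | rfl | rfl | rfl | rfl <;>
            first
              | exact Set.mem_insert _ _
              | exact Set.mem_insert_of_mem _ rfl
              | exact absurd hv (by assumption)) |>.elim
      · exact hAC hAm hCm
      · exact hAC hAm hCm
      · exact hrank1 A D (fun v hv => by
          rcases hvert v hv with rfl | rfl | rfl | rfl | rfl | rfl <;>
            first
              | exact Set.mem_insert _ _
              | exact Set.mem_insert_of_mem _ rfl
              | exact absurd hv (by assumption)) |>.elim
      · exact hrank1 A A (fun v hv => by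
          rcases hvert v hv with rfl | rfl | rfl | rfl | rfl | rfl <;>
            first
              | exact Set.mem_insert _ _
              | exact Set.mem_insert_of_mem _ rfl
              | exact absurd hv (by assumption)) |>.elim
      · exact hBD hBm hDm
      · exact hrank1 B C (fun v hv => by
          rcases hvert v hv with rfl | rfl | rfl | rfl | rfl | rfl <;>
            first
              | exact Set.mem_insert _ _
              | exact Set.mem_insert_of_mem _ rfl
              | exact absurd hv (by assumption)) |>.elim
      · exact hBD hBm hDm
      · exact hrank1 B B (fun v hv => by
          rcases hvert v hv with rfl | rfl | rfl | rfl | rfl | rfl <;>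
            first
              | exact Set.mem_insert _ _
              | exact Set.mem_insert_of_mem _ rfl
              | exact absurd hv (by assumption)) |>.elim
      · exact hrank1 C D (fun v hv => by
          rcases hvert v hv with rfl | rfl | rfl | rfl | rfl | rfl <;>
            first
              | exact Set.mem_insert _ _
              | exact Set.mem_insert_of_mem _ rfl
              | exact absurd hv (by assumption)) |>.elim
      · exact hrank1 C C (fun v hv => by
          rcases hvert v hv with rfl | rfl | rfl | rfl | rfl | rfl <;>
            first
              | exact Set.mem_insert _ _
              | exact Set.mem_insert_of_mem _ rfl
              | exact absurd hv (by assumption)) |>.elim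
      · exact hrank1 D D (fun v hv => by
          rcases hvert v hv with rfl | rfl | rfl | rfl | rfl | rfl <;>
            first
              | exact Set.mem_insert _ _
              | exact Set.mem_insert_of_mem _ rfl
              | exact absurd hv (by assumption)) |>.elim
      · exact hrank1 A A (fun v hv => by
          rcases hvert v hv with rfl | rfl | rfl | rfl | rfl | rfl <;>
            first
              | exact Set.mem_insert _ _
              | exact Set.mem_insert_of_mem _ rfl
              | exact absurd hv (by assumption)) |>.elim
  · -- backward direction
    intro hmem
    simp only [Set.mem_insert_iff, Set.mem_singleton_iff] at hmem
    have hxr : (0:ℝ) < x * (1 / Real.sqrt 2) := mul_pos hx hr0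
    have hyr : (0:ℝ) < y * (1 / Real.sqrt 2) := mul_pos hy hr0
    have hyxr : (0:ℝ) < (y - x) * (1 / Real.sqrt 2) := mul_pos hyx hr0
    rcases hmem with h | h | h | h | h
    · -- n = n₁, facet {A, B, C, D}
      have he : (!₂[a, b, c] : EuclideanSpace ℝ (Fin 3)) = !₂[0, 0, -1] := by
        rw [← hnabc, h, hn₁]
      have ha' : a = 0 := by simpa using congrArg (fun v => v 0) he
      have hb' : b = 0 := by simpa using congrArg (fun v => v 1) he
      have hc' : c = -1 := by simpa using congrArg (fun v => v 2) he
      have hTeq : T = {A, B, C, D} := by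
        apply Set.Subset.antisymm
        · intro v hv
          obtain ⟨hv6, hd⟩ := (hmemT v).mp hv
          rcases hv6 with rfl | rfl | rfl | rfl | rfl | rfl
          · exact Set.mem_insert _ _
          · simp
          · simp
          · simp
          · exfalso
            have h1 := hd.1
            simp only [hiA, hiE, ha', hb', hc'] at h1
            linarith
          · exfalso
            have h1 := hd.1
            simp only [hiA, hiF, ha', hb', hc'] at h1
            linarith
        · intro v hv
          apply (hmemT v).mpr
          rcases hv with rfl | rfl | rfl | rfl <;>
            exact ⟨by tauto, by
              rw [hiA, hiB, hiC, hiD, hiE, hiF, ha', hb', hc']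
              refine ⟨?_, ?_, ?_, ?_, ?_, ?_⟩ <;> linarith [hxr, hyr, hyxr, hx, hy, hyx, hxy]⟩
      rw [hTeq]
      refine rank_two_of _ A B D (by simp) (by simp) (by simp) ?_ ?_
      · intro w hw
        rcases hw with rfl | rfl | rfl | rfl
        · exact ⟨0, 0, by ext i; fin_cases i <;> simp [hA]⟩
        · exact ⟨1, 0, by ext i; fin_cases i <;> simp [hA, hB]⟩
        · exact ⟨1, 1, by ext i; fin_cases i <;> simp [hA, hB, hC, hD] <;> ring⟩
        · exact ⟨0, 1, by ext i; fin_cases i <;> simp [hA, hD]⟩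
      · rw [LinearIndependent.pair_iff]
        intro s t hst
        have h0 := congrArg (fun v => v 0) hst
        simp [hA, hB, hD] at h0
        have ht : t = 0 := h0.resolve_right (by intro h'; linarith)
        subst ht
        have h1 := congrArg (fun v => v 1) hst
        simp [hA, hB, hD] at h1
        have hs : s = 0 := h1.resolve_right (by intro h'; linarith)
        exact ⟨hs, rfl⟩
    · -- n = n₂, facet {A, B, E}
      have he : (!₂[a, b, c] : EuclideanSpace ℝ (Fin 3))
          = !₂[1 / Real.sqrt 2, 0, 1 / Real.sqrt 2] := by
        rw [← hnabc, h, hn₂]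
      have ha' : a = 1 / Real.sqrt 2 := by simpa using congrArg (fun v => v 0) he
      have hb' : b = 0 := by simpa using congrArg (fun v => v 1) he
      have hc' : c = 1 / Real.sqrt 2 := by simpa using congrArg (fun v => v 2) he
      have hTeq : T = {A, B, E} := by
        apply Set.Subset.antisymm
        · intro v hv
          obtain ⟨hv6, hd⟩ := (hmemT v).mp hv
          rcases hv6 with rfl | rfl | rfl | rfl | rfl | rfl
          · exact Set.mem_insert _ _
          · simp
          · exfalso
            have h1 := hd.1
            simp only [hiA, hiC, ha', hb', hc'] at h1
            linarith [hxr, hyr, hyxr, hx, hy, hyx, hxy]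
          · exfalso
            have h1 := hd.1
            simp only [hiA, hiD, ha', hb', hc'] at h1
            linarith [hxr, hyr, hyxr, hx, hy, hyx, hxy]
          · simp
          · exfalso
            have h1 := hd.1
            simp only [hiA, hiF, ha', hb', hc'] at h1
            linarith [hxr, hyr, hyxr, hx, hy, hyx, hxy]
        · intro v hv
          apply (hmemT v).mpr
          rcases hv with rfl | rfl | rfl <;>
            exact ⟨by tauto, by
              rw [hiA, hiB, hiC, hiD, hiE, hiF, ha', hb', hc']
              refine ⟨?_, ?_, ?_, ?_, ?_, ?_⟩ <;> linarith [hxr, hyr, hyxr, hx, hy, hyx, hxy]⟩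
      rw [hTeq]
      refine rank_two_of _ A B E (by simp) (by simp) (by simp) ?_ ?_
      · intro w hw
        rcases hw with rfl | rfl | rfl
        · exact ⟨0, 0, by ext i; fin_cases i <;> simp [hA]⟩
        · exact ⟨1, 0, by ext i; fin_cases i <;> simp [hA, hB]⟩
        · exact ⟨0, 1, by ext i; fin_cases i <;> simp [hA, hE]⟩
      · rw [LinearIndependent.pair_iff]
        intro s t hst
        have h0 := congrArg (fun v => v 0) hst
        simp [hA, hB, hE] at h0
        have ht : t = 0 := h0.resolve_right (by intro h'; linarith)
        subst ht
        have h1 := congrArg (fun v => v 1) hst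
        simp [hA, hB, hE] at h1
        have hs : s = 0 := h1.resolve_right (by intro h'; linarith)
        exact ⟨hs, rfl⟩
    · -- n = n₃, facet {C, D, F}
      have he : (!₂[a, b, c] : EuclideanSpace ℝ (Fin 3))
          = !₂[-(1 / Real.sqrt 2), 0, 1 / Real.sqrt 2] := by
        rw [← hnabc, h, hn₃]
      have ha' : a = -(1 / Real.sqrt 2) := by simpa using congrArg (fun v => v 0) he
      have hb' : b = 0 := by simpa using congrArg (fun v => v 1) he
      have hc' : c = 1 / Real.sqrt 2 := by simpa using congrArg (fun v => v 2) he
      have hTeq : T = {C, D, F} := by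
        apply Set.Subset.antisymm
        · intro v hv
          obtain ⟨hv6, hd⟩ := (hmemT v).mp hv
          rcases hv6 with rfl | rfl | rfl | rfl | rfl | rfl
          · exfalso
            have h1 := hd.2.2.1
            simp only [hiA, hiC, ha', hb', hc'] at h1
            linarith [hxr, hyr, hyxr, hx, hy, hyx, hxy]
          · exfalso
            have h1 := hd.2.2.1
            simp only [hiB, hiC, ha', hb', hc'] at h1
            linarith [hxr, hyr, hyxr, hx, hy, hyx, hxy]
          · exact Set.mem_insert _ _
          · simp
          · exfalso
            have h1 := hd.2.2.2.2.2
            simp only [hiE, hiF, ha', hb', hc'] at h1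
            linarith [hxr, hyr, hyxr, hx, hy, hyx, hxy]
          · simp
        · intro v hv
          apply (hmemT v).mpr
          rcases hv with rfl | rfl | rfl <;>
            exact ⟨by tauto, by
              rw [hiA, hiB, hiC, hiD, hiE, hiF, ha', hb', hc']
              refine ⟨?_, ?_, ?_, ?_, ?_, ?_⟩ <;> linarith [hxr, hyr, hyxr, hx, hy, hyx, hxy]⟩
      rw [hTeq]
      refine rank_two_of _ C D F (by simp) (by simp) (by simp) ?_ ?_
      · intro w hw
        rcases hw with rfl | rfl | rfl
        · exact ⟨0, 0, by ext i; fin_cases i <;> simp [hC]⟩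
        · exact ⟨1, 0, by ext i; fin_cases i <;> simp [hC, hD]⟩
        · exact ⟨0, 1, by ext i; fin_cases i <;> simp [hC, hF]⟩
      · rw [LinearIndependent.pair_iff]
        intro s t hst
        have h0 := congrArg (fun v => v 0) hst
        simp [hC, hD, hF] at h0
        have ht : t = 0 := h0.resolve_right (by intro h'; linarith)
        subst ht
        have h1 := congrArg (fun v => v 1) hst
        simp [hC, hD, hF] at h1
        have hs : s = 0 := h1.resolve_right (by intro h'; linarith)
        exact ⟨hs, rfl⟩
    · -- n = n₄, facet {B, C, E, F}
      have he : (!₂[a, b, c] : EuclideanSpace ℝ (Fin 3))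
          = !₂[0, 1 / Real.sqrt 2, 1 / Real.sqrt 2] := by
        rw [← hnabc, h, hn₄]
      have ha' : a = 0 := by simpa using congrArg (fun v => v 0) he
      have hb' : b = 1 / Real.sqrt 2 := by simpa using congrArg (fun v => v 1) he
      have hc' : c = 1 / Real.sqrt 2 := by simpa using congrArg (fun v => v 2) he
      have hTeq : T = {B, C, E, F} := by
        apply Set.Subset.antisymm
        · intro v hv
          obtain ⟨hv6, hd⟩ := (hmemT v).mp hv
          rcases hv6 with rfl | rfl | rfl | rfl | rfl | rfl
          · exfalso
            have h1 := hd.2.1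
            simp only [hiA, hiB, ha', hb', hc'] at h1
            linarith [hxr, hyr, hyxr, hx, hy, hyx, hxy]
          · exact Set.mem_insert _ _
          · simp
          · exfalso
            have h1 := hd.2.1
            simp only [hiB, hiD, ha', hb', hc'] at h1
            linarith [hxr, hyr, hyxr, hx, hy, hyx, hxy]
          · simp
          · simp
        · intro v hv
          apply (hmemT v).mpr
          rcases hv with rfl | rfl | rfl | rfl <;>
            exact ⟨by tauto, by
              rw [hiA, hiB, hiC, hiD, hiE, hiF, ha', hb', hc']
              refine ⟨?_, ?_, ?_, ?_, ?_, ?_⟩ <;> linarith [hxr, hyr, hyxr, hx, hy, hyx, hxy]⟩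
      rw [hTeq]
      refine rank_two_of _ B C E (by simp) (by simp) (by simp) ?_ ?_
      · intro w hw
        rcases hw with rfl | rfl | rfl | rfl
        · exact ⟨0, 0, by ext i; fin_cases i <;> simp [hB]⟩
        · exact ⟨1, 0, by ext i; fin_cases i <;> simp [hB, hC]⟩
        · exact ⟨0, 1, by ext i; fin_cases i <;> simp [hB, hE]⟩
        · refine ⟨(y - x) / y, 1, by
            ext i
            fin_cases i <;> simp [hB, hC, hE, hF] <;> field_simp <;> ring⟩
      · rw [LinearIndependent.pair_iff]
        intro s t hst
        have h0 := congrArg (fun v => v 1) hst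
        simp [hB, hC, hE] at h0
        have ht : t = 0 := h0.resolve_right (by intro h'; linarith)
        subst ht
        have h1 := congrArg (fun v => v 0) hst
        simp [hB, hC, hE] at h1
        have hs : s = 0 := h1.resolve_right (by intro h'; linarith)
        exact ⟨hs, rfl⟩
    · -- n = n₅, facet {A, D, E, F}
      have he : (!₂[a, b, c] : EuclideanSpace ℝ (Fin 3))
          = !₂[0, -(1 / Real.sqrt 2), 1 / Real.sqrt 2] := by
        rw [← hnabc, h, hn₅]
      have ha' : a = 0 := by simpa using congrArg (fun v => v 0) he
      have hb' : b = -(1 / Real.sqrt 2) := by simpa using congrArg (fun v => v 1) he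
      have hc' : c = 1 / Real.sqrt 2 := by simpa using congrArg (fun v => v 2) he
      have hTeq : T = {A, D, E, F} := by
        apply Set.Subset.antisymm
        · intro v hv
          obtain ⟨hv6, hd⟩ := (hmemT v).mp hv
          rcases hv6 with rfl | rfl | rfl | rfl | rfl | rfl
          · exact Set.mem_insert _ _
          · exfalso
            have h1 := hd.1
            simp only [hiA, hiB, ha', hb', hc'] at h1
            linarith [hxr, hyr, hyxr, hx, hy, hyx, hxy]
          · exfalso
            have h1 := hd.1
            simp only [hiA, hiC, ha', hb', hc'] at h1
            linarith [hxr, hyr, hyxr, hx, hy, hyx, hxy]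
          · simp
          · simp
          · simp
        · intro v hv
          apply (hmemT v).mpr
          rcases hv with rfl | rfl | rfl | rfl <;>
            exact ⟨by tauto, by
              rw [hiA, hiB, hiC, hiD, hiE, hiF, ha', hb', hc']
              refine ⟨?_, ?_, ?_, ?_, ?_, ?_⟩ <;> linarith [hxr, hyr, hyxr, hx, hy, hyx, hxy]⟩
      rw [hTeq]
      refine rank_two_of _ A D E (by simp) (by simp) (by simp) ?_ ?_
      · intro w hw
        rcases hw with rfl | rfl | rfl | rfl
        · exact ⟨0, 0, by ext i; fin_cases i <;> simp [hA]⟩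
        · exact ⟨1, 0, by ext i; fin_cases i <;> simp [hA, hD]⟩
        · exact ⟨0, 1, by ext i; fin_cases i <;> simp [hA, hE]⟩
        · refine ⟨(y - x) / y, 1, by
            ext i
            fin_cases i <;> simp [hA, hD, hE, hF] <;> field_simp <;> ring⟩
      · rw [LinearIndependent.pair_iff]
        intro s t hst
        have h0 := congrArg (fun v => v 1) hst
        simp [hA, hD, hE] at h0
        have ht : t = 0 := h0.resolve_right (by intro h'; linarith)
        subst ht
        have h1 := congrArg (fun v => v 0) hst
        simp [hA, hD, hE] at h1
        have hs : s = 0 := h1.resolve_right (by intro h'; linarith)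
        exact ⟨hs, rfl⟩
end
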